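/- Let q be a prime power, let G ∈ F_q^{k×n} be a matrix of rank k with columns g_1,…,g_n, and let s_1, s_2 ≥ 1 with s_1 + s_2 = k. Then E_1(G) + E_2(G) ≥ k + min(s_1, s_2). -/

import Mathlib

open Finset

/-- The `r`-th harmonic number `H_r = ∑_{i=1}^r 1/i`, as a real number (`H_0 = 0`). -/
noncomputable def harm (r : ℕ) : ℝ := ∑ i ∈ Finset.range r, (1 : ℝ) / (i + 1)

/-- The span of the columns of `G` indexed by the subset `S ⊆ {1,…,n}`. -/
noncomputable def colSpan (F : Type*) [Field F] {k n : ℕ}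
    (G : Matrix (Fin k) (Fin n) F) (S : Finset (Fin n)) : Submodule F (Fin k → F) :=
  Submodule.span F ((fun j => fun i => G i j) '' (S : Set (Fin n)))

/-- `α_V(s)`: the number of `s`-element subsets `S ⊆ {1,…,n}` whose columns span a
subspace containing the target subspace `V`. -/
noncomputable def alphaCount (F : Type*) [Field F] {k n : ℕ}
    (G : Matrix (Fin k) (Fin n) F) (V : Submodule F (Fin k → F)) (s : ℕ) : ℕ :=
  Nat.card {S : Finset (Fin n) // S.card = s ∧ V ≤ colSpan F G S}

/-- The first file subspace `F₁ = span(e_1, …, e_{s₁}) ⊆ F_q^k`. -/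
noncomputable def file1 (F : Type*) [Field F] (k s1 : ℕ) : Submodule F (Fin k → F) :=
  Submodule.span F {v : Fin k → F | ∃ i : Fin k, (i : ℕ) < s1 ∧ v = Pi.single i 1}

/-- The second file subspace `F₂ = span(e_{s₁+1}, …, e_k) ⊆ F_q^k`. -/
noncomputable def file2 (F : Type*) [Field F] (k s1 : ℕ) : Submodule F (Fin k → F) :=
  Submodule.span F {v : Fin k → F | ∃ i : Fin k, s1 ≤ (i : ℕ) ∧ v = Pi.single i 1}

/-- The expected retrieval time `E(G, V) = n·H_n − ∑_{s=1}^{n−1} α_V(s)/C(n−1,s)`. -/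
noncomputable def Etime (F : Type*) [Field F] {k n : ℕ}
    (G : Matrix (Fin k) (Fin n) F) (V : Submodule F (Fin k → F)) : ℝ :=
  (n : ℝ) * harm n -
    ∑ s ∈ Finset.Icc 1 (n - 1), (alphaCount F G V s : ℝ) / ((n - 1).choose s : ℝ)

/-! ### Auxiliary lemmas -/

lemma colSpan_finrank_le (F : Type*) [Field F] {k n : ℕ}
    (G : Matrix (Fin k) (Fin n) F) (S : Finset (Fin n)) :
    Module.finrank F (colSpan F G S) ≤ S.card := by
  classical
  have h : colSpan F G S
      = Submodule.span F ((S.image (fun j i => G i j)) : Set (Fin k → F)) := by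
    rw [colSpan, Finset.coe_image]
  rw [h]
  exact (finrank_span_finset_le_card _).trans Finset.card_image_le

lemma le_finrank_file1 (F : Type*) [Field F] {k s1 : ℕ} (h : s1 ≤ k) :
    s1 ≤ Module.finrank F (file1 F k s1) := by
  classical
  set b : Fin s1 → (Fin k → F) := fun j => Pi.single (Fin.castLE h j) 1 with hb
  have hli : LinearIndependent F b := by
    have h2 := (Pi.basisFun F (Fin k)).linearIndependent.comp (Fin.castLE h)
      (Fin.castLE_injective h)
    simpa [hb, Function.comp_def] using h2
  have hsub : Set.range b ⊆ {v : Fin k → F | ∃ i : Fin k, (i : ℕ) < s1 ∧ v = Pi.single i 1} := by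
    rintro _ ⟨j, rfl⟩
    exact ⟨Fin.castLE h j, by simp, rfl⟩
  have hle : Submodule.span F (Set.range b) ≤ file1 F k s1 := Submodule.span_mono hsub
  calc s1 = Module.finrank F (Submodule.span F (Set.range b)) := by
        rw [finrank_span_eq_card hli, Fintype.card_fin]
    _ ≤ _ := Submodule.finrank_mono hle

lemma le_finrank_file2 (F : Type*) [Field F] {k s1 s2 : ℕ} (h : s1 + s2 ≤ k) :
    s2 ≤ Module.finrank F (file2 F k s1) := by
  classical
  set ι : Fin s2 → Fin k := fun j => ⟨s1 + j, by omega⟩ with hι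
  have hinj : Function.Injective ι := by
    intro a b hab
    simp [hι, Fin.mk.injEq] at hab
    exact Fin.ext hab
  set b : Fin s2 → (Fin k → F) := fun j => Pi.single (ι j) 1 with hb
  have hli : LinearIndependent F b := by
    have h2 := (Pi.basisFun F (Fin k)).linearIndependent.comp ι hinj
    simpa [hb, Function.comp_def] using h2
  have hsub : Set.range b ⊆ {v : Fin k → F | ∃ i : Fin k, s1 ≤ (i : ℕ) ∧ v = Pi.single i 1} := by
    rintro _ ⟨j, rfl⟩
    exact ⟨ι j, by simp [hι], rfl⟩
  have hle : Submodule.span F (Set.range b) ≤ file2 F k s1 := Submodule.span_mono hsub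
  calc s2 = Module.finrank F (Submodule.span F (Set.range b)) := by
        rw [finrank_span_eq_card hli, Fintype.card_fin]
    _ ≤ _ := Submodule.finrank_mono hle

lemma file_sup_top (F : Type*) [Field F] {k s1 : ℕ} :
    file1 F k s1 ⊔ file2 F k s1 = ⊤ := by
  classical
  rw [eq_top_iff, ← (Pi.basisFun F (Fin k)).span_eq]
  refine Submodule.span_le.2 ?_
  rintro _ ⟨i, rfl⟩
  rcases lt_or_ge (i : ℕ) s1 with hi | hi
  · exact Submodule.mem_sup_left (Submodule.subset_span ⟨i, hi, by simp⟩)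
  · exact Submodule.mem_sup_right (Submodule.subset_span ⟨i, hi, by simp⟩)

open scoped Classical in
lemma alpha_eq (F : Type*) [Field F] {k n : ℕ}
    (G : Matrix (Fin k) (Fin n) F) (V : Submodule F (Fin k → F)) (s : ℕ) :
    alphaCount F G V s
      = (Finset.univ.filter
          (fun S : Finset (Fin n) => S.card = s ∧ V ≤ colSpan F G S)).card := by
  classical
  rw [alphaCount, Nat.card_eq_fintype_card, Fintype.card_subtype]

open scoped Classical in
lemma alpha_le (F : Type*) [Field F] {k n : ℕ}
    (G : Matrix (Fin k) (Fin n) F) (V : Submodule F (Fin k → F)) (s : ℕ) :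
    alphaCount F G V s ≤ n.choose s := by
  classical
  rw [alpha_eq]
  calc (Finset.univ.filter
          (fun S : Finset (Fin n) => S.card = s ∧ V ≤ colSpan F G S)).card
      ≤ (Finset.univ.filter (fun S : Finset (Fin n) => S.card = s)).card := by
        apply Finset.card_le_card
        exact Finset.monotone_filter_right _ (fun S _ h => h.1)
    _ = n.choose s := by
        rw [← Fintype.card_subtype]
        simp

lemma alpha_zero (F : Type*) [Field F] {k n : ℕ}
    (G : Matrix (Fin k) (Fin n) F) (V : Submodule F (Fin k → F)) {d s : ℕ}
    (hd : d ≤ Module.finrank F V) (hs : s < d) :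
    alphaCount F G V s = 0 := by
  classical
  rw [alpha_eq, Finset.card_eq_zero, Finset.filter_eq_empty_iff]
  rintro S -
  rintro ⟨hc, hle⟩
  have h1 : Module.finrank F V ≤ Module.finrank F (colSpan F G S) :=
    Submodule.finrank_mono hle
  have h2 := colSpan_finrank_le F G S
  omega

lemma alpha_add_le (F : Type*) [Field F] {k n : ℕ}
    (G : Matrix (Fin k) (Fin n) F) (V W : Submodule F (Fin k → F))
    (hsup : V ⊔ W = ⊤) {s : ℕ} (hs : s < k) :
    alphaCount F G V s + alphaCount F G W s ≤ n.choose s := by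
  classical
  rw [alpha_eq, alpha_eq]
  set A := Finset.univ.filter (fun S : Finset (Fin n) => S.card = s ∧ V ≤ colSpan F G S)
  set B := Finset.univ.filter (fun S : Finset (Fin n) => S.card = s ∧ W ≤ colSpan F G S)
  have hdisj : Disjoint A B := by
    rw [Finset.disjoint_left]
    intro S hSA hSB
    simp only [A, B, Finset.mem_filter] at hSA hSB
    obtain ⟨-, hc, h1⟩ := hSA
    obtain ⟨-, -, h2⟩ := hSB
    have htop : colSpan F G S = ⊤ := by
      rw [eq_top_iff, ← hsup]
      exact sup_le h1 h2
    have h3 := colSpan_finrank_le F G S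
    rw [htop] at h3
    have h4 : Module.finrank F (⊤ : Submodule F (Fin k → F)) = k := by
      rw [finrank_top]
      simp [Module.finrank_pi]
    omega
  calc A.card + B.card = (A ∪ B).card := (Finset.card_union_of_disjoint hdisj).symm
    _ ≤ (Finset.univ.filter (fun S : Finset (Fin n) => S.card = s)).card := by
        apply Finset.card_le_card
        apply Finset.union_subset
        · exact Finset.monotone_filter_right _ (fun S _ h => h.1)
        · exact Finset.monotone_filter_right _ (fun S _ h => h.1)
    _ = n.choose s := by
        rw [← Fintype.card_subtype]
        simp

lemma Etime_eq (F : Type*) [Field F] {k n : ℕ}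
    (G : Matrix (Fin k) (Fin n) F) (V : Submodule F (Fin k → F))
    (hn : 1 ≤ n) (h0 : alphaCount F G V 0 = 0) :
    Etime F G V = ∑ s ∈ Finset.range n,
      ((n : ℝ) / ((n - s : ℕ) : ℝ) - (alphaCount F G V s : ℝ) / ((n - 1).choose s : ℝ)) := by
  rw [Finset.sum_sub_distrib, Etime]
  congr 1
  · rw [harm, Finset.mul_sum, ← Finset.sum_range_reflect]
    apply Finset.sum_congr rfl
    intro s hs
    have hs' : s < n := Finset.mem_range.1 hs
    have h1 : n - s = (n - 1 - s) + 1 := by omega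
    rw [h1]
    push_cast
    ring
  · have h2 : Finset.range n = insert 0 (Finset.Icc 1 (n - 1)) := by
      ext x
      simp only [Finset.mem_range, Finset.mem_insert, Finset.mem_Icc]
      omega
    rw [h2, Finset.sum_insert (by simp), h0]
    simp

lemma choose_div_eq {n s : ℕ} (h : s < n) :
    ((n.choose s : ℕ) : ℝ) / (((n - 1).choose s : ℕ) : ℝ) = (n : ℝ) / ((n - s : ℕ) : ℝ) := by
  have hcr : (n - s) * n.choose s = n * (n - 1).choose s := by
    obtain ⟨m, rfl⟩ : ∃ m, n = m + 1 := ⟨n - 1, by omega⟩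
    have h1 := Nat.add_one_mul_choose_eq m s
    have h2 := Nat.choose_succ_right_eq (m + 1) s
    simp only [Nat.add_sub_cancel]
    calc (m + 1 - s) * (m + 1).choose s = (m + 1).choose s * (m + 1 - s) := mul_comm _ _
      _ = (m + 1).choose (s + 1) * (s + 1) := h2.symm
      _ = (m + 1) * m.choose s := h1.symm
  have h1 : 0 < (n - 1).choose s := Nat.choose_pos (by omega)
  have h2 : 0 < n - s := by omega
  rw [div_eq_div_iff (Nat.cast_ne_zero.2 h1.ne') (Nat.cast_ne_zero.2 h2.ne')]
  exact_mod_cast (by rw [mul_comm (n - s) _] at hcr; exact hcr :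
    n.choose s * (n - s) = n * (n - 1).choose s)

/-- For any rank-`k` code `G` and partition `s₁ + s₂ = k` with `s₁, s₂ ≥ 1`,
`E₁(G) + E₂(G) ≥ k + min(s₁, s₂)`. -/
theorem stmt0 (q k n s1 s2 : ℕ) (hq : IsPrimePow q)
    (F : Type*) [Field F] [Fintype F] (hF : Fintype.card F = q)
    (G : Matrix (Fin k) (Fin n) F) (hrank : G.rank = k)
    (hs1 : 1 ≤ s1) (hs2 : 1 ≤ s2) (hk : s1 + s2 = k) :
    Etime F G (file1 F k s1) + Etime F G (file2 F k s1) ≥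
      (k : ℝ) + ((min s1 s2 : ℕ) : ℝ) := by
  classical
  have hkn : k ≤ n := by
    have h := G.rank_le_card_width
    rw [hrank] at h
    simpa using h
  have hn : 1 ≤ n := by omega
  set m := min s1 s2 with hm
  have hd1 : s1 ≤ Module.finrank F (file1 F k s1) := le_finrank_file1 F (by omega)
  have hd2 : s2 ≤ Module.finrank F (file2 F k s1) := le_finrank_file2 F (by omega)
  have h01 : alphaCount F G (file1 F k s1) 0 = 0 := alpha_zero F G _ hd1 (by omega)
  have h02 : alphaCount F G (file2 F k s1) 0 = 0 := alpha_zero F G _ hd2 (by omega)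
  rw [ge_iff_le, Etime_eq F G _ hn h01, Etime_eq F G _ hn h02, ← Finset.sum_add_distrib]
  have key : ∀ s ∈ Finset.range n,
      ((if s < m then (1 : ℝ) else 0) + (if s < k then (1 : ℝ) else 0)) ≤
      (((n : ℝ) / ((n - s : ℕ) : ℝ)
          - (alphaCount F G (file1 F k s1) s : ℝ) / ((n - 1).choose s : ℝ))
        + ((n : ℝ) / ((n - s : ℕ) : ℝ)
          - (alphaCount F G (file2 F k s1) s : ℝ) / ((n - 1).choose s : ℝ))) := by
    intro s hsn
    have hsn' : s < n := Finset.mem_range.1 hsn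
    have hC : (0 : ℝ) < (((n - 1).choose s : ℕ) : ℝ) := by
      exact_mod_cast Nat.choose_pos (by omega)
    have hone : (1 : ℝ) ≤ (n : ℝ) / ((n - s : ℕ) : ℝ) := by
      rw [one_le_div (by exact_mod_cast (by omega : 0 < n - s))]
      exact_mod_cast (by omega : n - s ≤ n)
    have hub : ∀ a : ℕ, a ≤ n.choose s →
        (a : ℝ) / (((n - 1).choose s : ℕ) : ℝ) ≤ (n : ℝ) / ((n - s : ℕ) : ℝ) := by
      intro a ha
      rw [← choose_div_eq hsn']
      exact div_le_div_of_nonneg_right (by exact_mod_cast ha) hC.le |>.trans_eq rfl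
    by_cases h1 : s < m
    · have hz1 : alphaCount F G (file1 F k s1) s = 0 := alpha_zero F G _ hd1 (by omega)
      have hz2 : alphaCount F G (file2 F k s1) s = 0 := alpha_zero F G _ hd2 (by omega)
      rw [if_pos h1, if_pos (by omega : s < k), hz1, hz2]
      push_cast
      simp only [zero_div]
      linarith
    · rw [if_neg h1]
      by_cases h2 : s < k
      · rw [if_pos h2]
        have hadd := alpha_add_le F G (file1 F k s1) (file2 F k s1) (file_sup_top F) h2
        have hq1 : (alphaCount F G (file1 F k s1) s : ℝ) / (((n - 1).choose s : ℕ) : ℝ)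
            + (alphaCount F G (file2 F k s1) s : ℝ) / (((n - 1).choose s : ℕ) : ℝ)
            ≤ (n : ℝ) / ((n - s : ℕ) : ℝ) := by
          rw [← add_div]
          have h3 := hub _ hadd
          push_cast at h3
          exact h3
        linarith
      · rw [if_neg h2]
        have hq1 := hub _ (alpha_le F G (file1 F k s1) s)
        have hq2 := hub _ (alpha_le F G (file2 F k s1) s)
        linarith
  refine le_trans ?_ (Finset.sum_le_sum key)
  rw [Finset.sum_add_distrib]
  have hind : ∀ a : ℕ, a ≤ n →
      ∑ s ∈ Finset.range n, (if s < a then (1 : ℝ) else 0) = a := by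
    intro a ha
    rw [Finset.sum_ite, Finset.sum_const, Finset.sum_const]
    have hfe : (Finset.range n).filter (· < a) = Finset.range a := by
      ext x
      simp only [Finset.mem_filter, Finset.mem_range]
      omega
    rw [hfe]
    simp
  rw [hind m (by omega), hind k hkn]
  linarith
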